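/- Let G be a k-vertex-critical graph and let S be a homogeneous set of G. Then for each connected component A of G[S], if χ(A) = m with m < k, then A is an m-vertex-critical graph. -/

import Mathlib

open SimpleGraph

/-- `G` contains no induced subgraph isomorphic to `H`. -/
def HFree {W V : Type*} (H : SimpleGraph W) (G : SimpleGraph V) : Prop :=
  IsEmpty (H ↪g G)

/-- `G` is `k`-vertex-critical: `χ(G) = k` and deleting any vertex decreases
the chromatic number below `k`. -/
def IsKVertexCritical {V : Type*} (G : SimpleGraph V) (k : ℕ) : Prop :=
  G.chromaticNumber = k ∧ ∀ v : V, (G.induce {v}ᶜ).chromaticNumber < k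

/-- The star `K_{1,s}`: center `0`, leaves `1, …, s`. -/
def starGraph (s : ℕ) : SimpleGraph (Fin (s + 1)) :=
  SimpleGraph.fromRel (fun i _ => (i : ℕ) = 0)

/-- `K_{1,s} + P_1`: the disjoint union of the star `K_{1,s}`
(center `0`, leaves `1, …, s`) and the isolated vertex `s + 1`. -/
def starPlusP1 (s : ℕ) : SimpleGraph (Fin (s + 2)) :=
  SimpleGraph.fromRel (fun i j => (i : ℕ) = 0 ∧ (j : ℕ) ≠ 0 ∧ (j : ℕ) ≤ s)

/-- The complement of `K_3 + 2P_1`: vertices `0,1,2` pairwise nonadjacent,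
vertices `3,4` adjacent to everything else. -/
def coK3Plus2P1 : SimpleGraph (Fin 5) :=
  SimpleGraph.fromRel (fun i j => 3 ≤ (i : ℕ) ∨ 3 ≤ (j : ℕ))

theorem stmt2 {V : Type*} (G : SimpleGraph V) (k : ℕ) (h : IsKVertexCritical G k)
    (S : Set V) (hhom : ∀ v ∉ S, (∀ s ∈ S, G.Adj v s) ∨ (∀ s ∈ S, ¬ G.Adj v s))
    (A : Set V) (hAS : A ⊆ S) (hne : A.Nonempty) (hconn : (G.induce A).Connected)
    (hcomp : ∀ a ∈ A, ∀ s ∈ S \ A, ¬ G.Adj a s)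
    (m : ℕ) (hm : (G.induce A).chromaticNumber = m) (hmk : m < k) :
    IsKVertexCritical (G.induce A) m := by
  classical
  obtain ⟨hk, hcrit⟩ := h
  have hAm : (G.induce A).Colorable m := by
    rw [← chromaticNumber_le_iff_colorable, hm]
  obtain ⟨d⟩ := hAm
  obtain ⟨v0, hv0⟩ := hne
  have hm1 : 1 ≤ m := by
    rcases Nat.eq_zero_or_pos m with h0 | h1
    · subst h0; exact (d ⟨v0, hv0⟩).elim0
    · exact h1
  refine ⟨hm, ?_⟩
  rintro ⟨v, hv⟩
  by_contra hcon
  replace hcon := not_lt.mp hcon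
  by_cases hA1 : ∀ w ∈ A, w = v
  · have hE : IsEmpty ↥({(⟨v, hv⟩ : ↑A)}ᶜ : Set ↑A) := by
      constructor
      rintro ⟨⟨w, hwA⟩, hbc⟩
      exact hbc (Subtype.ext (hA1 w hwA))
    rw [chromaticNumber_eq_zero_of_isEmpty] at hcon
    have : (m : ℕ∞) ≤ 0 := hcon
    simp at this
    omega
  push_neg at hA1
  obtain ⟨w0, hw0A, hw0v⟩ := hA1
  -- get a coloring of G - v with n < k colors
  have hlt := hcrit v
  have hntop : (G.induce {v}ᶜ).chromaticNumber ≠ ⊤ :=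
    (lt_of_lt_of_le hlt le_top).ne
  obtain ⟨n, hn⟩ := WithTop.ne_top_iff_exists.mp hntop
  have hnk : n < k := by rw [← hn] at hlt; exact Nat.cast_lt.mp hlt
  have hcoln : (G.induce {v}ᶜ).Colorable n := by
    rw [← chromaticNumber_le_iff_colorable, ← hn]
    exact le_rfl
  obtain ⟨c⟩ := hcoln
  -- colors used on A \ {v}
  set C : Finset (Fin n) := Finset.univ.filter
    (fun col => ∃ w, ∃ _ : w ∈ A, ∃ h2 : w ∈ ({v}ᶜ : Set V), c ⟨w, h2⟩ = col) with hC
  have memC : ∀ col, col ∈ C ↔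
      ∃ w, ∃ _ : w ∈ A, ∃ h2 : w ∈ ({v}ᶜ : Set V), c ⟨w, h2⟩ = col := by
    intro col; simp [hC]
  -- restriction of c to A \ {v} lands in C and is a proper coloring
  have hxv : ∀ x : ↥({(⟨v, hv⟩ : ↑A)}ᶜ : Set ↑A), ((x : ↑A) : V) ∈ ({v}ᶜ : Set V) := by
    rintro ⟨⟨w, hwA⟩, hx⟩
    simp only [Set.mem_compl_iff, Set.mem_singleton_iff]
    intro hwv
    exact hx (Subtype.ext hwv)
  have cr : ((G.induce A).induce {(⟨v, hv⟩ : ↑A)}ᶜ).Coloring ↥C := by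
    refine Coloring.mk (fun x => ⟨c ⟨((x : ↑A) : V), hxv x⟩, ?_⟩) ?_
    · exact (memC _).mpr ⟨((x : ↑A) : V), (x : ↑A).2, hxv x, rfl⟩
    · intro x y hadj
      have hG : G.Adj ((x : ↑A) : V) ((y : ↑A) : V) := hadj
      have : (G.induce {v}ᶜ).Adj ⟨_, hxv x⟩ ⟨_, hxv y⟩ := hG
      intro hEq
      exact c.valid this (Subtype.ext_iff.mp hEq)
  have hcard : m ≤ C.card := by
    have h1 : ((G.induce A).induce {(⟨v, hv⟩ : ↑A)}ᶜ).Colorable C.card := by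
      have := cr.colorable
      rwa [Fintype.card_coe] at this
    have h2 := le_trans hcon h1.chromaticNumber_le
    exact_mod_cast h2
  obtain ⟨f⟩ : Nonempty (Fin m ↪ ↥C) := by
    apply Function.Embedding.nonempty_of_card_le
    simpa [Fintype.card_coe] using hcard
  -- the new coloring of G
  set c' : V → Fin n := fun x =>
    if hx : x ∈ A then ↑(f (d ⟨x, hx⟩))
    else c ⟨x, by simp only [Set.mem_compl_iff, Set.mem_singleton_iff]; rintro rfl; exact hx hv⟩
    with hc'
  have hc'A : ∀ x (hx : x ∈ A), c' x = ↑(f (d ⟨x, hx⟩)) := by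
    intro x hx; simp [hc', hx]
  have hc'nA : ∀ x (hx : x ∉ A), ∃ h2 : x ∈ ({v}ᶜ : Set V), c' x = c ⟨x, h2⟩ := by
    intro x hx
    refine ⟨?_, by simp [hc', hx]⟩
    simp only [Set.mem_compl_iff, Set.mem_singleton_iff]; rintro rfl; exact hx hv
  have key : ∀ x y, x ∈ A → y ∉ A → G.Adj x y → c' x ≠ c' y := by
    intro x y hx hy hadj
    by_cases hyS : y ∈ S
    · exact absurd hadj (hcomp x hx y ⟨hyS, hy⟩)
    rcases hhom y hyS with hall | hnone
    · -- y adjacent to all of S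
      obtain ⟨h2, hcy⟩ := hc'nA y hy
      rw [hcy, hc'A x hx]
      obtain ⟨w, hwA, hw2, hwc⟩ := (memC _).mp (f (d ⟨x, hx⟩)).2
      rw [← hwc]
      have hyw : G.Adj y w := hall w (hAS hwA)
      have : (G.induce {v}ᶜ).Adj ⟨w, hw2⟩ ⟨y, h2⟩ := hyw.symm
      exact c.valid this
    · exact absurd (hadj.symm) (hnone x (hAS hx))
  have valid : ∀ {x y : V}, G.Adj x y → c' x ≠ c' y := by
    intro x y hadj
    by_cases hx : x ∈ A <;> by_cases hy : y ∈ A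
    · rw [hc'A x hx, hc'A y hy]
      intro hEq
      have hd : d ⟨x, hx⟩ = d ⟨y, hy⟩ := f.injective (Subtype.ext hEq)
      have : (G.induce A).Adj ⟨x, hx⟩ ⟨y, hy⟩ := hadj
      exact d.valid this hd
    · exact key x y hx hy hadj
    · exact (key y x hy hx hadj.symm).symm
    · obtain ⟨h2x, hcx⟩ := hc'nA x hx
      obtain ⟨h2y, hcy⟩ := hc'nA y hy
      rw [hcx, hcy]
      have : (G.induce {v}ᶜ).Adj ⟨x, h2x⟩ ⟨y, h2y⟩ := hadj
      exact c.valid this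
  have : G.Colorable n := ⟨Coloring.mk c' valid⟩
  have hle := this.chromaticNumber_le
  rw [hk] at hle
  have : k ≤ n := by exact_mod_cast hle
  omega
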